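/- Let q = x_0x_4 + x_1x_3 + x_2² ∈ ℂ[x_0,…,x_4] and let f ∈ ℂ[x_0,…,x_4] be homogeneous of degree 3. Then the following are equivalent: (A) there exist an invertible 5×5 complex matrix M with q∘M = q, integers u ≥ v ≥ 0 not both zero, and a homogeneous linear form ℓ such that every monomial x_0^{a_0}⋯x_4^{a_4} appearing with nonzero coefficient in f∘M + q·ℓ satisfies (a_0 − a_4)·u + (a_1 − a_3)·v ≤ 0; (B) there exist an invertible 5×5 complex matrix M with q∘M = q and a homogeneous linear form ℓ such that every monomial appearing with nonzero coefficient in g := f∘M + q·ℓ lies in one of the following three lists: (i) the degree-3 monomials in x_1, x_2, x_3, x_4 only (i.e. g = c(x_1,x_2,x_3,x_4)); (ii) { x_0x_2x_3, x_0x_3², x_1x_2x_3, x_1x_2x_4, x_1x_3², x_1x_3x_4, x_1x_4² } together with all degree-3 monomials in x_2, x_3, x_4 (i.e. g = x_0x_3·l(x_2,x_3) + x_1x_2·l₁(x_3,x_4) + x_1·q′(x_3,x_4) + c(x_2,x_3,x_4)); (iii) { x_0x_3², x_1x_2x_3, x_1x_3², x_1²x_4, x_1x_2x_4, x_1x_3x_4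 } together with all degree-3 monomials in x_2, x_3, x_4 (i.e. g = λ·x_0x_3² + x_1x_3·l₁(x_2,x_3) + x_1x_4·l₂(x_1,x_2,x_3) + c(x_2,x_3,x_4)). Condition (A) is the Hilbert–Mumford numerical criterion for the cubic section X = Q ∩ {f = 0} of the smooth quadric threefold Q to be not properly stable for the SO(Q)(ℂ)-action. -/

import Mathlib

open MvPolynomial

/-- The quadric form `q = x_0x_4 + x_1x_3 + x_2²` defining the smooth quadric threefold. -/
noncomputable def quadQ : MvPolynomial (Fin 5) ℂ := X 0 * X 4 + X 1 * X 3 + X 2 ^ 2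

/-- Composition `p ∘ M` of a polynomial with the linear change of coordinates given by a
matrix `M`, i.e. the substitution `x_i ↦ ∑_j M_{ij} x_j`. -/
noncomputable def compMat (M : Matrix (Fin 5) (Fin 5) ℂ) (p : MvPolynomial (Fin 5) ℂ) :
    MvPolynomial (Fin 5) ℂ :=
  MvPolynomial.bind₁ (fun i => ∑ j, MvPolynomial.C (M i j) * MvPolynomial.X j) p

/-- Exponent vector of the cubic monomial `x_i x_j x_k`. -/
noncomputable def mon3 (i j k : Fin 5) : Fin 5 →₀ ℕ :=
  Finsupp.single i 1 + Finsupp.single j 1 + Finsupp.single k 1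

lemma mon3_apply (a b c i : Fin 5) :
    mon3 a b c i
      = (if a = i then 1 else 0) + (if b = i then 1 else 0) + (if c = i then 1 else 0) := by
  simp [mon3, Finsupp.single_apply]

lemma finsupp_eq_iff5 (d e : Fin 5 →₀ ℕ) :
    d = e ↔ (d 0 = e 0 ∧ d 1 = e 1 ∧ d 2 = e 2 ∧ d 3 = e 3 ∧ d 4 = e 4) := by
  constructor
  · rintro rfl; exact ⟨rfl, rfl, rfl, rfl, rfl⟩
  · rintro ⟨h0, h1, h2, h3, h4⟩; ext i; fin_cases i <;> assumption

lemma monomial_mon3 (i j k : Fin 5) (c : ℂ) :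
    monomial (mon3 i j k) c = C c * X i * X j * X k := by
  rw [mon3, monomial_add_single, monomial_add_single, ← C_mul_X_eq_monomial, pow_one, pow_one]

lemma compMat_add (M : Matrix (Fin 5) (Fin 5) ℂ) (p q : MvPolynomial (Fin 5) ℂ) :
    compMat M (p + q) = compMat M p + compMat M q := by simp only [compMat, map_add]

lemma compMat_mul (M : Matrix (Fin 5) (Fin 5) ℂ) (p q : MvPolynomial (Fin 5) ℂ) :
    compMat M (p * q) = compMat M p * compMat M q := by simp only [compMat, map_mul]

lemma compMat_compMat (M N : Matrix (Fin 5) (Fin 5) ℂ) (p : MvPolynomial (Fin 5) ℂ) :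
    compMat N (compMat M p) = compMat (M * N) p := by
  have key : (fun i => (bind₁ (fun i => ∑ j, C (N i j) * X j)) (∑ j, C (M i j) * X j))
      = (fun i => ∑ j, C ((M * N) i j) * (X j : MvPolynomial (Fin 5) ℂ)) := by
    funext i
    simp only [map_sum, map_mul, bind₁_X_right, bind₁_C_right, Finset.mul_sum,
      Matrix.mul_apply, Finset.sum_mul]
    rw [Finset.sum_comm]
    refine Finset.sum_congr rfl fun k _ => Finset.sum_congr rfl fun j _ => ?_
    ring
  simp only [compMat, bind₁_bind₁, Function.comp_def, key]

lemma compMat_isHomogeneous (M : Matrix (Fin 5) (Fin 5) ℂ) {p : MvPolynomial (Fin 5) ℂ} {n : ℕ}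
    (hp : p.IsHomogeneous n) : (compMat M p).IsHomogeneous n := by
  have := hp.aeval (fun i => ∑ j, MvPolynomial.C (M i j) * MvPolynomial.X j) (fun i => by
    apply IsHomogeneous.sum
    intro j _
    exact isHomogeneous_C_mul_X _ _)
  rw [compMat, bind₁]
  simpa using this

lemma quadQ_isHomogeneous : quadQ.IsHomogeneous 2 := by
  rw [quadQ]
  exact (((isHomogeneous_X _ _).mul (isHomogeneous_X _ _)).add
    ((isHomogeneous_X _ _).mul (isHomogeneous_X _ _))).add (isHomogeneous_X_pow _ _)

lemma homog_sum3 {p : MvPolynomial (Fin 5) ℂ} (hp : p.IsHomogeneous 3)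
    {d : Fin 5 →₀ ℕ} (hd : d ∈ p.support) : d 0 + d 1 + d 2 + d 3 + d 4 = 3 := by
  rw [mem_support_iff] at hd
  have := hp hd
  rw [← this, Finsupp.weight_apply, Finsupp.sum_fintype]
  · simp [Fin.sum_univ_five, mul_comm]
  · intro; simp

/-! ### The matrix `N t` -/

noncomputable def Nmat (t : ℂ) : Matrix (Fin 5) (Fin 5) ℂ :=
  1 + Matrix.single 0 3 (-t) + Matrix.single 1 4 t

lemma Nmat_isUnit (t : ℂ) : IsUnit (Nmat t) := by
  apply (Matrix.isUnit_iff_isUnit_det _).mpr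
  apply Matrix.isUnit_det_of_right_inverse (B := Nmat (-t))
  ext i j
  fin_cases i <;> fin_cases j <;>
    simp [Nmat, Matrix.mul_apply, Fin.sum_univ_five, Matrix.one_apply, Matrix.single]

lemma Nmat_row0 (t : ℂ) :
    (∑ j, C (Nmat t 0 j) * (X j : MvPolynomial (Fin 5) ℂ)) = X 0 + C (-t) * X 3 := by
  simp [Nmat, Fin.sum_univ_five, Matrix.one_apply, Matrix.single]
lemma Nmat_row1 (t : ℂ) :
    (∑ j, C (Nmat t 1 j) * (X j : MvPolynomial (Fin 5) ℂ)) = X 1 + C t * X 4 := by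
  simp [Nmat, Fin.sum_univ_five, Matrix.one_apply, Matrix.single]
lemma Nmat_row_other (t : ℂ) (i : Fin 5) (h0 : i ≠ 0) (h1 : i ≠ 1) :
    (∑ j, C (Nmat t i j) * (X j : MvPolynomial (Fin 5) ℂ)) = X i := by
  fin_cases i
  · exact absurd rfl h0
  · exact absurd rfl h1
  all_goals simp [Nmat, Fin.sum_univ_five, Matrix.one_apply, Matrix.single]

lemma compMat_quadQ_Nmat (t : ℂ) : compMat (Nmat t) quadQ = quadQ := by
  simp only [compMat, quadQ, map_add, map_mul, map_pow, map_neg, bind₁_X_right,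
    Nmat_row0, Nmat_row1, Nmat_row_other t 2 (by decide) (by decide),
    Nmat_row_other t 3 (by decide) (by decide), Nmat_row_other t 4 (by decide) (by decide)]
  ring

lemma compMat_Nmat_monomial_fixed (t : ℂ) (d : Fin 5 →₀ ℕ) (c : ℂ)
    (h0 : d 0 = 0) (h1 : d 1 = 0) :
    compMat (Nmat t) (monomial d c) = monomial d c := by
  rw [compMat, bind₁_monomial]
  have : ∀ i ∈ d.support, (∑ j, C (Nmat t i j) * (X j : MvPolynomial (Fin 5) ℂ)) ^ d i
      = (X i : MvPolynomial (Fin 5) ℂ) ^ d i := by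
    intro i hi
    rw [Finsupp.mem_support_iff] at hi
    have hi0 : i ≠ 0 := by rintro rfl; exact hi h0
    have hi1 : i ≠ 1 := by rintro rfl; exact hi h1
    rw [Nmat_row_other t i hi0 hi1]
  rw [Finset.prod_congr rfl this, monomial_eq, Finsupp.prod]

lemma expand_114 (t c : ℂ) :
    compMat (Nmat t) (monomial (mon3 1 1 4) c)
      = monomial (mon3 1 1 4) c + monomial (mon3 1 4 4) (2*t*c)
        + monomial (mon3 4 4 4) (t^2*c) := by
  simp only [monomial_mon3]
  simp only [compMat, map_mul, bind₁_C_right, bind₁_X_right, Nmat_row1,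
    Nmat_row_other t 4 (by decide) (by decide), map_ofNat, map_pow]
  ring

lemma expand_1jk (t c : ℂ) (j k : Fin 5) (hj0 : j ≠ 0) (hj1 : j ≠ 1)
    (hk0 : k ≠ 0) (hk1 : k ≠ 1) :
    compMat (Nmat t) (monomial (mon3 1 j k) c)
      = monomial (mon3 1 j k) c + monomial (mon3 4 j k) (t*c) := by
  simp only [monomial_mon3]
  simp only [compMat, map_mul, bind₁_C_right, bind₁_X_right, Nmat_row1,
    Nmat_row_other t j hj0 hj1, Nmat_row_other t k hk0 hk1]
  ring

lemma expand_033 (t c : ℂ) :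
    compMat (Nmat t) (monomial (mon3 0 3 3) c)
      = monomial (mon3 0 3 3) c + monomial (mon3 3 3 3) (-(t*c)) := by
  simp only [monomial_mon3]
  simp only [compMat, map_mul, map_neg, bind₁_C_right, bind₁_X_right, Nmat_row0,
    Nmat_row_other t 3 (by decide) (by decide)]
  ring

/-! ### quadQ times a linear monomial -/

lemma quadQ_mul_CX (a : ℂ) (k : Fin 5) :
    quadQ * (C a * X k)
      = monomial (mon3 0 4 k) a + monomial (mon3 1 3 k) a + monomial (mon3 2 2 k) a := by
  rw [quadQ, monomial_mon3, monomial_mon3, monomial_mon3]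
  ring

lemma support_add' {p q : MvPolynomial (Fin 5) ℂ} {e : Fin 5 →₀ ℕ}
    (h : e ∈ (p + q).support) : e ∈ p.support ∨ e ∈ q.support :=
  Finset.mem_union.mp (support_add h)

lemma support_mono' {d e : Fin 5 →₀ ℕ} {c : ℂ} (h : e ∈ (monomial d c).support) : e = d :=
  Finset.mem_singleton.mp (support_monomial_subset h)

lemma support_quadQ_mul_CX {a : ℂ} {k : Fin 5} {e : Fin 5 →₀ ℕ}
    (h : e ∈ (quadQ * (C a * X k)).support) :
    e = mon3 0 4 k ∨ e = mon3 1 3 k ∨ e = mon3 2 2 k := by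
  rw [quadQ_mul_CX] at h
  rcases support_add' h with h | h
  · rcases support_add' h with h | h
    · exact Or.inl (support_mono' h)
    · exact Or.inr (Or.inl (support_mono' h))
  · exact Or.inr (Or.inr (support_mono' h))

lemma classify (u v : ℤ) (hu : 1 ≤ u) (hv : 1 ≤ v) (huv : v ≤ u)
    (n0 n1 n2 n3 n4 : ℕ) (hsum : n0+n1+n2+n3+n4 = 3)
    (hw : ((n0:ℤ) - n4)*u + ((n1:ℤ) - n3)*v ≤ 0)
    (hnot : ¬(1 ≤ n0 ∧ 1 ≤ n4)) :
    (n0=1∧n1=0∧n2=1∧n3=1∧n4=0) ∨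
    (n0=1∧n1=0∧n2=0∧n3=2∧n4=0) ∨
    (n0=0∧n1=2∧n2=0∧n3=0∧n4=1) ∨
    (n0=0∧n1=1∧n2=1∧n3=1∧n4=0) ∨
    (n0=0∧n1=1∧n2=1∧n3=0∧n4=1) ∨
    (n0=0∧n1=1∧n2=0∧n3=2∧n4=0) ∨
    (n0=0∧n1=1∧n2=0∧n3=1∧n4=1) ∨
    (n0=0∧n1=1∧n2=0∧n3=0∧n4=2) ∨
    (n0=0∧n1=0) := by
  have F1 : ¬(n4 + 1 ≤ n0 ∧ n3 ≤ n1) := by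
    rintro ⟨a, b⟩
    have a' : 1 ≤ (n0:ℤ) - n4 := by omega
    have b' : 0 ≤ (n1:ℤ) - n3 := by omega
    nlinarith
  have F2 : ¬(n4 + 2 ≤ n0 ∧ n3 ≤ n1 + 1) := by
    rintro ⟨a, b⟩
    have a' : 2 ≤ (n0:ℤ) - n4 := by omega
    have b' : -1 ≤ (n1:ℤ) - n3 := by omega
    nlinarith
  have F3 : ¬(n0 = n4 ∧ n3 + 1 ≤ n1) := by
    rintro ⟨a, b⟩
    have a' : (n0:ℤ) - n4 = 0 := by omega
    have b' : 1 ≤ (n1:ℤ) - n3 := by omega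
    nlinarith
  by_cases c0 : n0 = 0
  · by_cases c1 : n1 = 0
    · exact Or.inr (Or.inr (Or.inr (Or.inr (Or.inr (Or.inr (Or.inr (Or.inr ⟨c0, c1⟩)))))))
    · by_cases c2 : n1 = 2
      · exact Or.inr (Or.inr (Or.inl (by omega)))
      · by_cases h3a : n3 = 2
        · exact Or.inr (Or.inr (Or.inr (Or.inr (Or.inr (Or.inl (by omega))))))
        · by_cases h3b : n3 = 1
          · by_cases h4 : n4 = 1
            · exact Or.inr (Or.inr (Or.inr (Or.inr (Or.inr (Or.inr (Or.inl (by omega)))))))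
            · exact Or.inr (Or.inr (Or.inr (Or.inl (by omega))))
          · by_cases h4 : n4 = 2
            · exact Or.inr (Or.inr (Or.inr (Or.inr (Or.inr (Or.inr (Or.inr (Or.inl (by omega))))))))
            · exact Or.inr (Or.inr (Or.inr (Or.inr (Or.inl (by omega)))))
  · by_cases h3 : n3 = 1
    · exact Or.inl (by omega)
    · exact Or.inr (Or.inl (by omega))

lemma classify0 (u : ℤ) (hu : 1 ≤ u) (n0 n4 : ℕ)
    (hw : ((n0:ℤ) - n4)*u ≤ 0) : n0 ≤ n4 := by
  by_contra hc
  have a' : 1 ≤ (n0:ℤ) - n4 := by omega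
  nlinarith
lemma eq_mon3_04 (d : Fin 5 →₀ ℕ) (hsum : d 0 + d 1 + d 2 + d 3 + d 4 = 3)
    (h0 : 1 ≤ d 0) (h4 : 1 ≤ d 4) :
    d = mon3 0 4 0 ∨ d = mon3 0 4 1 ∨ d = mon3 0 4 2 ∨ d = mon3 0 4 3 ∨ d = mon3 0 4 4 := by
  simp [finsupp_eq_iff5, mon3_apply]
  omega


/-- Hilbert–Mumford analysis of not-properly-stable cubic sections of the quadric
threefold `Q : x_0x_4 + x_1x_3 + x_2² = 0`: the numerical criterion (A) is equivalent to
normal forms (B) of types (N1), (N2), (N3). -/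
theorem not_properly_stable_iff (f : MvPolynomial (Fin 5) ℂ) (hf : f.IsHomogeneous 3) :
    (∃ M : Matrix (Fin 5) (Fin 5) ℂ, IsUnit M ∧ compMat M quadQ = quadQ ∧
      ∃ u v : ℤ, u ≥ v ∧ v ≥ 0 ∧ (u, v) ≠ (0, 0) ∧
        ∃ ℓ : MvPolynomial (Fin 5) ℂ, ℓ.IsHomogeneous 1 ∧
          ∀ d ∈ (compMat M f + quadQ * ℓ).support,
            ((d 0 : ℤ) - d 4) * u + ((d 1 : ℤ) - d 3) * v ≤ 0)
    ↔
    (∃ M : Matrix (Fin 5) (Fin 5) ℂ, IsUnit M ∧ compMat M quadQ = quadQ ∧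
      ∃ ℓ : MvPolynomial (Fin 5) ℂ, ℓ.IsHomogeneous 1 ∧
        ((∀ d ∈ (compMat M f + quadQ * ℓ).support, d 0 = 0) ∨
         (∀ d ∈ (compMat M f + quadQ * ℓ).support,
            d = mon3 0 2 3 ∨ d = mon3 0 3 3 ∨ d = mon3 1 2 3 ∨ d = mon3 1 2 4 ∨
            d = mon3 1 3 3 ∨ d = mon3 1 3 4 ∨ d = mon3 1 4 4 ∨ (d 0 = 0 ∧ d 1 = 0)) ∨
         (∀ d ∈ (compMat M f + quadQ * ℓ).support,
            d = mon3 0 3 3 ∨ d = mon3 1 2 3 ∨ d = mon3 1 3 3 ∨ d = mon3 1 1 4 ∨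
            d = mon3 1 2 4 ∨ d = mon3 1 3 4 ∨ (d 0 = 0 ∧ d 1 = 0)))) := by
  constructor
  · rintro ⟨M, hM, hMq, u, v, huv, hv0, hne, ℓ, hℓ, hwt⟩
    set g : MvPolynomial (Fin 5) ℂ := compMat M f + quadQ * ℓ with hgdef
    have hg3 : g.IsHomogeneous 3 := by
      refine (compMat_isHomogeneous M hf).add ?_
      simpa using quadQ_isHomogeneous.mul hℓ
    have hu1 : (1:ℤ) ≤ u := by
      have : ¬(u = 0 ∧ v = 0) := fun ⟨h1, h2⟩ => hne (by rw [h1, h2])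
      omega
    -- the four correction coefficients
    set L : MvPolynomial (Fin 5) ℂ :=
      C (coeff (mon3 0 4 1) g) * X 1 + C (coeff (mon3 0 4 2) g) * X 2 +
      C (coeff (mon3 0 4 3) g) * X 3 + C (coeff (mon3 0 4 4) g) * X 4 with hLdef
    have hL1 : L.IsHomogeneous 1 :=
      (((isHomogeneous_C_mul_X _ _).add (isHomogeneous_C_mul_X _ _)).add
        (isHomogeneous_C_mul_X _ _)).add (isHomogeneous_C_mul_X _ _)
    set g' : MvPolynomial (Fin 5) ℂ := g - quadQ * L with hg'def
    have hg'3 : g'.IsHomogeneous 3 := by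
      refine hg3.sub ?_
      simpa using quadQ_isHomogeneous.mul hL1
    have hid : compMat M f + quadQ * (ℓ - L) = g' := by
      rw [hg'def, hgdef]; ring
    have hqL : quadQ * L
        = ((monomial (mon3 0 4 1) (coeff (mon3 0 4 1) g) + monomial (mon3 1 3 1) (coeff (mon3 0 4 1) g)
            + monomial (mon3 2 2 1) (coeff (mon3 0 4 1) g))
          + (monomial (mon3 0 4 2) (coeff (mon3 0 4 2) g) + monomial (mon3 1 3 2) (coeff (mon3 0 4 2) g)
            + monomial (mon3 2 2 2) (coeff (mon3 0 4 2) g)))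
          + ((monomial (mon3 0 4 3) (coeff (mon3 0 4 3) g) + monomial (mon3 1 3 3) (coeff (mon3 0 4 3) g)
            + monomial (mon3 2 2 3) (coeff (mon3 0 4 3) g))
          + (monomial (mon3 0 4 4) (coeff (mon3 0 4 4) g) + monomial (mon3 1 3 4) (coeff (mon3 0 4 4) g)
            + monomial (mon3 2 2 4) (coeff (mon3 0 4 4) g))) := by
      rw [hLdef, mul_add, mul_add, mul_add, quadQ_mul_CX, quadQ_mul_CX, quadQ_mul_CX, quadQ_mul_CX]
      ring
    have h040 : coeff (mon3 0 4 0) g = 0 := by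
      rw [← notMem_support_iff]
      intro hmem
      have := hwt _ hmem
      simp [mon3_apply] at this
      omega
    have hz0 : coeff (mon3 0 4 0) g' = 0 := by
      rw [hg'def, coeff_sub, hqL, h040]
      simp [coeff_monomial, finsupp_eq_iff5, mon3_apply]
    have hz1 : coeff (mon3 0 4 1) g' = 0 := by
      rw [hg'def, coeff_sub, hqL]
      simp [coeff_monomial, finsupp_eq_iff5, mon3_apply]
    have hz2 : coeff (mon3 0 4 2) g' = 0 := by
      rw [hg'def, coeff_sub, hqL]
      simp [coeff_monomial, finsupp_eq_iff5, mon3_apply]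
    have hz3 : coeff (mon3 0 4 3) g' = 0 := by
      rw [hg'def, coeff_sub, hqL]
      simp [coeff_monomial, finsupp_eq_iff5, mon3_apply]
    have hz4 : coeff (mon3 0 4 4) g' = 0 := by
      rw [hg'def, coeff_sub, hqL]
      simp [coeff_monomial, finsupp_eq_iff5, mon3_apply]
    have hsupp : ∀ e ∈ g'.support, e ∈ g.support ∨
        e ∈ (quadQ * (C (coeff (mon3 0 4 1) g) * X 1)).support ∨
        e ∈ (quadQ * (C (coeff (mon3 0 4 2) g) * X 2)).support ∨
        e ∈ (quadQ * (C (coeff (mon3 0 4 3) g) * X 3)).support ∨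
        e ∈ (quadQ * (C (coeff (mon3 0 4 4) g) * X 4)).support := by
      intro e he
      by_contra hc
      push_neg at hc
      obtain ⟨h1, h2, h3, h4, h5⟩ := hc
      apply mem_support_iff.mp he
      have hsplit : g' = g - quadQ * (C (coeff (mon3 0 4 1) g) * X 1)
          - quadQ * (C (coeff (mon3 0 4 2) g) * X 2) - quadQ * (C (coeff (mon3 0 4 3) g) * X 3)
          - quadQ * (C (coeff (mon3 0 4 4) g) * X 4) := by
        rw [hg'def, hLdef]; ring
      rw [hsplit, coeff_sub, coeff_sub, coeff_sub, coeff_sub,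
        notMem_support_iff.mp h1, notMem_support_iff.mp h2, notMem_support_iff.mp h3,
        notMem_support_iff.mp h4, notMem_support_iff.mp h5]
      ring
    have hnot04 : ∀ d ∈ g'.support, ¬(1 ≤ d 0 ∧ 1 ≤ d 4) := by
      intro d hd ⟨a, b⟩
      rcases eq_mon3_04 d (homog_sum3 hg'3 hd) a b with rfl | rfl | rfl | rfl | rfl
      · exact mem_support_iff.mp hd hz0
      · exact mem_support_iff.mp hd hz1
      · exact mem_support_iff.mp hd hz2
      · exact mem_support_iff.mp hd hz3
      · exact mem_support_iff.mp hd hz4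
    by_cases hv : v = 0
    · -- type (N1) : no x0
      subst hv
      refine ⟨M, hM, hMq, ℓ - L, hℓ.sub hL1, Or.inl ?_⟩
      rw [hid]
      intro d hd
      by_contra hd0
      have hd0' : 1 ≤ d 0 := Nat.one_le_iff_ne_zero.mpr hd0
      rcases hsupp d hd with hdg | hk | hk | hk | hk
      · have hw' := hwt d hdg
        simp only [mul_zero, add_zero] at hw'
        have hle : d 0 ≤ d 4 := classify0 u hu1 _ _ hw'
        exact hnot04 d hd ⟨hd0', le_trans hd0' hle⟩
      · rcases support_quadQ_mul_CX hk with rfl | rfl | rfl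
        · exact mem_support_iff.mp hd hz1
        · exact hd0 (by simp [mon3_apply])
        · exact hd0 (by simp [mon3_apply])
      · rcases support_quadQ_mul_CX hk with rfl | rfl | rfl
        · exact mem_support_iff.mp hd hz2
        · exact hd0 (by simp [mon3_apply])
        · exact hd0 (by simp [mon3_apply])
      · rcases support_quadQ_mul_CX hk with rfl | rfl | rfl
        · exact mem_support_iff.mp hd hz3
        · exact hd0 (by simp [mon3_apply])
        · exact hd0 (by simp [mon3_apply])
      · rcases support_quadQ_mul_CX hk with rfl | rfl | rfl
        · exact mem_support_iff.mp hd hz4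
        · exact hd0 (by simp [mon3_apply])
        · exact hd0 (by simp [mon3_apply])
    · -- v ≥ 1
      have hv1 : (1:ℤ) ≤ v := by omega
      have hb1 : coeff (mon3 0 4 1) g = 0 := by
        rw [← notMem_support_iff]
        intro hmem
        have := hwt _ hmem
        simp [mon3_apply] at this
        omega
      have h114w : mon3 1 1 4 ∈ g'.support → 2*v ≤ u := by
        intro h
        rcases hsupp _ h with hdg | hk | hk | hk | hk
        · have := hwt _ hdg
          simp [mon3_apply] at this
          omega
        all_goals
          rcases support_quadQ_mul_CX hk with h' | h' | h' <;>
            simp [finsupp_eq_iff5, mon3_apply] at h'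
      have h023w : mon3 0 2 3 ∈ g'.support → u ≤ v := by
        intro h
        rcases hsupp _ h with hdg | hk | hk | hk | hk
        · have := hwt _ hdg
          simp [mon3_apply] at this
          omega
        all_goals
          rcases support_quadQ_mul_CX hk with h' | h' | h' <;>
            simp [finsupp_eq_iff5, mon3_apply] at h'
      have hcl : ∀ d ∈ g'.support,
          d = mon3 0 2 3 ∨ d = mon3 0 3 3 ∨ d = mon3 1 1 4 ∨ d = mon3 1 2 3 ∨ d = mon3 1 2 4 ∨
          d = mon3 1 3 3 ∨ d = mon3 1 3 4 ∨ d = mon3 1 4 4 ∨ (d 0 = 0 ∧ d 1 = 0) := by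
        intro d hd
        rcases hsupp d hd with hdg | hk | hk | hk | hk
        · rcases classify u v hu1 hv1 huv (d 0) (d 1) (d 2) (d 3) (d 4)
              (homog_sum3 hg'3 hd) (hwt d hdg) (hnot04 d hd) with
            H | H | H | H | H | H | H | H | H
          · exact Or.inl (by rw [finsupp_eq_iff5]; simp [mon3_apply]; omega)
          · exact Or.inr (Or.inl (by rw [finsupp_eq_iff5]; simp [mon3_apply]; omega))
          · exact Or.inr (Or.inr (Or.inl (by rw [finsupp_eq_iff5]; simp [mon3_apply]; omega)))
          · exact Or.inr (Or.inr (Or.inr (Or.inl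
              (by rw [finsupp_eq_iff5]; simp [mon3_apply]; omega))))
          · exact Or.inr (Or.inr (Or.inr (Or.inr (Or.inl
              (by rw [finsupp_eq_iff5]; simp [mon3_apply]; omega)))))
          · exact Or.inr (Or.inr (Or.inr (Or.inr (Or.inr (Or.inl
              (by rw [finsupp_eq_iff5]; simp [mon3_apply]; omega))))))
          · exact Or.inr (Or.inr (Or.inr (Or.inr (Or.inr (Or.inr (Or.inl
              (by rw [finsupp_eq_iff5]; simp [mon3_apply]; omega)))))))
          · exact Or.inr (Or.inr (Or.inr (Or.inr (Or.inr (Or.inr (Or.inr (Or.inl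
              (by rw [finsupp_eq_iff5]; simp [mon3_apply]; omega))))))))
          · exact Or.inr (Or.inr (Or.inr (Or.inr (Or.inr (Or.inr (Or.inr (Or.inr ⟨H.1, H.2⟩)))))))
        · rw [hb1] at hk
          simp at hk
        · rcases support_quadQ_mul_CX hk with rfl | rfl | rfl
          · exact absurd hz2 (mem_support_iff.mp hd)
          · exact Or.inr (Or.inr (Or.inr (Or.inl (by simp [finsupp_eq_iff5, mon3_apply]))))
          · exact Or.inr (Or.inr (Or.inr (Or.inr (Or.inr (Or.inr (Or.inr (Or.inr
              ⟨by simp [mon3_apply], by simp [mon3_apply]⟩)))))))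
        · rcases support_quadQ_mul_CX hk with rfl | rfl | rfl
          · exact absurd hz3 (mem_support_iff.mp hd)
          · exact Or.inr (Or.inr (Or.inr (Or.inr (Or.inr (Or.inl rfl)))))
          · exact Or.inr (Or.inr (Or.inr (Or.inr (Or.inr (Or.inr (Or.inr (Or.inr
              ⟨by simp [mon3_apply], by simp [mon3_apply]⟩)))))))
        · rcases support_quadQ_mul_CX hk with rfl | rfl | rfl
          · exact absurd hz4 (mem_support_iff.mp hd)
          · exact Or.inr (Or.inr (Or.inr (Or.inr (Or.inr (Or.inr (Or.inl rfl))))))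
          · exact Or.inr (Or.inr (Or.inr (Or.inr (Or.inr (Or.inr (Or.inr (Or.inr
              ⟨by simp [mon3_apply], by simp [mon3_apply]⟩)))))))
      by_cases hβ : coeff (mon3 1 1 4) g' = 0
      · -- type (N2)
        refine ⟨M, hM, hMq, ℓ - L, hℓ.sub hL1, Or.inr (Or.inl ?_)⟩
        rw [hid]
        intro d hd
        rcases hcl d hd with rfl | rfl | rfl | rfl | rfl | rfl | rfl | rfl | H
        · exact Or.inl rfl
        · exact Or.inr (Or.inl rfl)
        · exact absurd hβ (mem_support_iff.mp hd)
        · exact Or.inr (Or.inr (Or.inl rfl))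
        · exact Or.inr (Or.inr (Or.inr (Or.inl rfl)))
        · exact Or.inr (Or.inr (Or.inr (Or.inr (Or.inl rfl))))
        · exact Or.inr (Or.inr (Or.inr (Or.inr (Or.inr (Or.inl rfl)))))
        · exact Or.inr (Or.inr (Or.inr (Or.inr (Or.inr (Or.inr (Or.inl rfl))))))
        · exact Or.inr (Or.inr (Or.inr (Or.inr (Or.inr (Or.inr (Or.inr H))))))
      · -- type (N3)
        classical
        have h2v : 2*v ≤ u := h114w (mem_support_iff.mpr hβ)
        have h023n : mon3 0 2 3 ∉ g'.support := fun hmem => by have := h023w hmem; omega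
        set t : ℂ := -(coeff (mon3 1 4 4) g') / (2 * coeff (mon3 1 1 4) g') with htdef
        set r : MvPolynomial (Fin 5) ℂ := g' - monomial (mon3 1 1 4) (coeff (mon3 1 1 4) g')
          - monomial (mon3 1 4 4) (coeff (mon3 1 4 4) g') with hrdef
        have hrcl : ∀ d ∈ r.support,
            d = mon3 0 3 3 ∨ d = mon3 1 2 3 ∨ d = mon3 1 2 4 ∨ d = mon3 1 3 3 ∨
            d = mon3 1 3 4 ∨ (d 0 = 0 ∧ d 1 = 0) := by
          intro d hd
          have hcd := mem_support_iff.mp hd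
          by_cases e1 : d = mon3 1 1 4
          · exfalso; apply hcd
            rw [e1, hrdef, coeff_sub, coeff_sub, coeff_monomial, coeff_monomial,
              if_pos rfl, if_neg (by simp [finsupp_eq_iff5, mon3_apply])]
            ring
          · by_cases e2 : d = mon3 1 4 4
            · exfalso; apply hcd
              rw [e2, hrdef, coeff_sub, coeff_sub, coeff_monomial, coeff_monomial,
                if_neg (by simp [finsupp_eq_iff5, mon3_apply]), if_pos rfl]
              ring
            · have hdg' : d ∈ g'.support := by
                rw [mem_support_iff]
                intro h0
                apply hcd
                rw [hrdef, coeff_sub, coeff_sub, h0, coeff_monomial, coeff_monomial,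
                  if_neg (Ne.symm e1), if_neg (Ne.symm e2)]
                ring
              rcases hcl d hdg' with h | h | h | h | h | h | h | h | h
              · exact absurd (h ▸ hdg') h023n
              · exact Or.inl h
              · exact absurd h e1
              · exact Or.inr (Or.inl h)
              · exact Or.inr (Or.inr (Or.inl h))
              · exact Or.inr (Or.inr (Or.inr (Or.inl h)))
              · exact Or.inr (Or.inr (Or.inr (Or.inr (Or.inl h))))
              · exact absurd h e2
              · exact Or.inr (Or.inr (Or.inr (Or.inr (Or.inr h))))
        have hrsum : compMat (Nmat t) r
            = ∑ d ∈ r.support, compMat (Nmat t) (monomial d (coeff d r)) := by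
          conv_lhs => rw [← support_sum_monomial_coeff r]
          simp only [compMat]
          exact map_sum _ _ _
        have hrN : ∀ e ∈ (compMat (Nmat t) r).support,
            e = mon3 0 3 3 ∨ e = mon3 1 2 3 ∨ e = mon3 1 2 4 ∨ e = mon3 1 3 3 ∨
            e = mon3 1 3 4 ∨ (e 0 = 0 ∧ e 1 = 0) := by
          intro e he
          rw [hrsum] at he
          obtain ⟨d, hdmem, he'⟩ := Finset.mem_biUnion.mp (support_sum he)
          rcases hrcl d hdmem with rfl | rfl | rfl | rfl | rfl | ⟨hd0, hd1⟩
          · rw [expand_033] at he'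
            rcases support_add' he' with h | h
            · exact Or.inl (support_mono' h)
            · exact Or.inr (Or.inr (Or.inr (Or.inr (Or.inr
                ⟨by rw [support_mono' h]; simp [mon3_apply],
                 by rw [support_mono' h]; simp [mon3_apply]⟩))))
          · rw [expand_1jk t _ 2 3 (by decide) (by decide) (by decide) (by decide)] at he'
            rcases support_add' he' with h | h
            · exact Or.inr (Or.inl (support_mono' h))
            · exact Or.inr (Or.inr (Or.inr (Or.inr (Or.inr
                ⟨by rw [support_mono' h]; simp [mon3_apply],
                 by rw [support_mono' h]; simp [mon3_apply]⟩))))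
          · rw [expand_1jk t _ 2 4 (by decide) (by decide) (by decide) (by decide)] at he'
            rcases support_add' he' with h | h
            · exact Or.inr (Or.inr (Or.inl (support_mono' h)))
            · exact Or.inr (Or.inr (Or.inr (Or.inr (Or.inr
                ⟨by rw [support_mono' h]; simp [mon3_apply],
                 by rw [support_mono' h]; simp [mon3_apply]⟩))))
          · rw [expand_1jk t _ 3 3 (by decide) (by decide) (by decide) (by decide)] at he'
            rcases support_add' he' with h | h
            · exact Or.inr (Or.inr (Or.inr (Or.inl (support_mono' h))))
            · exact Or.inr (Or.inr (Or.inr (Or.inr (Or.inr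
                ⟨by rw [support_mono' h]; simp [mon3_apply],
                 by rw [support_mono' h]; simp [mon3_apply]⟩))))
          · rw [expand_1jk t _ 3 4 (by decide) (by decide) (by decide) (by decide)] at he'
            rcases support_add' he' with h | h
            · exact Or.inr (Or.inr (Or.inr (Or.inr (Or.inl (support_mono' h)))))
            · exact Or.inr (Or.inr (Or.inr (Or.inr (Or.inr
                ⟨by rw [support_mono' h]; simp [mon3_apply],
                 by rw [support_mono' h]; simp [mon3_apply]⟩))))
          · rw [compMat_Nmat_monomial_fixed t d _ hd0 hd1] at he'
            exact Or.inr (Or.inr (Or.inr (Or.inr (Or.inr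
              ⟨by rw [support_mono' he']; exact hd0, by rw [support_mono' he']; exact hd1⟩))))
        have h144N : coeff (mon3 1 4 4) (compMat (Nmat t) r) = 0 := by
          rw [← notMem_support_iff]
          intro hmem
          rcases hrN _ hmem with h | h | h | h | h | ⟨h0, h1⟩
          · simp [finsupp_eq_iff5, mon3_apply] at h
          · simp [finsupp_eq_iff5, mon3_apply] at h
          · simp [finsupp_eq_iff5, mon3_apply] at h
          · simp [finsupp_eq_iff5, mon3_apply] at h
          · simp [finsupp_eq_iff5, mon3_apply] at h
          · simp [mon3_apply] at h1
        refine ⟨M * Nmat t, hM.mul (Nmat_isUnit t), ?_, compMat (Nmat t) (ℓ - L),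
          compMat_isHomogeneous _ (hℓ.sub hL1), Or.inr (Or.inr ?_)⟩
        · rw [← compMat_compMat, hMq, compMat_quadQ_Nmat]
        · have hgid : compMat (M * Nmat t) f + quadQ * compMat (Nmat t) (ℓ - L)
              = compMat (Nmat t) g' := by
            rw [← compMat_compMat]
            conv_lhs => rw [← compMat_quadQ_Nmat t]
            rw [← compMat_mul, ← compMat_add, hid]
          rw [hgid]
          have hdec : compMat (Nmat t) g'
              = (monomial (mon3 1 1 4) (coeff (mon3 1 1 4) g')
                  + monomial (mon3 1 4 4) (2*t*coeff (mon3 1 1 4) g')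
                  + monomial (mon3 4 4 4) (t^2*coeff (mon3 1 1 4) g'))
                + (monomial (mon3 1 4 4) (coeff (mon3 1 4 4) g')
                  + monomial (mon3 4 4 4) (t*coeff (mon3 1 4 4) g'))
                + compMat (Nmat t) r := by
            have hsplit : g' = monomial (mon3 1 1 4) (coeff (mon3 1 1 4) g')
                + monomial (mon3 1 4 4) (coeff (mon3 1 4 4) g') + r := by
              rw [hrdef]; ring
            conv_lhs => rw [hsplit]
            rw [compMat_add, compMat_add, expand_114,
              expand_1jk t _ 4 4 (by decide) (by decide) (by decide) (by decide)]
          have hc144 : coeff (mon3 1 4 4) (compMat (Nmat t) g') = 0 := by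
            rw [hdec]
            rw [coeff_add, coeff_add, h144N]
            simp [coeff_monomial, finsupp_eq_iff5, mon3_apply]
            rw [htdef]
            field_simp
            ring
          intro d hd
          by_cases hd144 : d = mon3 1 4 4
          · exact absurd hc144 (by rw [← hd144]; exact mem_support_iff.mp hd)
          · rw [hdec] at hd
            rcases support_add' hd with h | h
            · rcases support_add' h with h | h
              · rcases support_add' h with h | h
                · rcases support_add' h with h | h
                  · exact Or.inr (Or.inr (Or.inr (Or.inl (support_mono' h))))
                  · exact absurd (support_mono' h) hd144
                · exact Or.inr (Or.inr (Or.inr (Or.inr (Or.inr (Or.inr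
                    ⟨by rw [support_mono' h]; simp [mon3_apply],
                     by rw [support_mono' h]; simp [mon3_apply]⟩)))))
              · rcases support_add' h with h | h
                · exact absurd (support_mono' h) hd144
                · exact Or.inr (Or.inr (Or.inr (Or.inr (Or.inr (Or.inr
                    ⟨by rw [support_mono' h]; simp [mon3_apply],
                     by rw [support_mono' h]; simp [mon3_apply]⟩)))))
            · rcases hrN d h with h | h | h | h | h | h
              · exact Or.inl h
              · exact Or.inr (Or.inl h)
              · exact Or.inr (Or.inr (Or.inr (Or.inr (Or.inl h))))
              · exact Or.inr (Or.inr (Or.inl h))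
              · exact Or.inr (Or.inr (Or.inr (Or.inr (Or.inr (Or.inl h)))))
              · exact Or.inr (Or.inr (Or.inr (Or.inr (Or.inr (Or.inr h)))))
  · rintro ⟨M, hM, hMq, ℓ, hℓ, hcase⟩
    refine ⟨M, hM, hMq, ?_⟩
    rcases hcase with h | h | h
    · refine ⟨1, 0, by norm_num, le_refl 0, by norm_num [Prod.ext_iff], ℓ, hℓ, ?_⟩
      intro d hd
      have h0 := h d hd
      omega
    · refine ⟨1, 1, le_refl 1, by norm_num, by norm_num [Prod.ext_iff], ℓ, hℓ, ?_⟩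
      intro d hd
      rcases h d hd with h' | h' | h' | h' | h' | h' | h' | ⟨h0, h1⟩
      · subst h'; simp [mon3_apply]
      · subst h'; simp [mon3_apply]
      · subst h'; simp [mon3_apply]
      · subst h'; simp [mon3_apply]
      · subst h'; simp [mon3_apply]
      · subst h'; simp [mon3_apply]
      · subst h'; simp [mon3_apply]
      · omega
    · refine ⟨2, 1, by norm_num, by norm_num, by norm_num [Prod.ext_iff], ℓ, hℓ, ?_⟩
      intro d hd
      rcases h d hd with h' | h' | h' | h' | h' | h' | ⟨h0, h1⟩
      · subst h'; simp [mon3_apply]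
      · subst h'; simp [mon3_apply]
      · subst h'; simp [mon3_apply]
      · subst h'; simp [mon3_apply]
      · subst h'; simp [mon3_apply]
      · subst h'; simp [mon3_apply]
      · omega
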